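/- The effective resistance distance R(v1,v2) = (e_{v1} − e_{v2})ᵀ L⁺ (e_{v1} − e_{v2}) on the vertices of a finite simple connected weighted graph satisfies the triangle inequality, and hence is a metric on V. -/

import Mathlib

open Matrix
lemma walkprop {V : Type*} [Fintype V] [DecidableEq V]
    (w : V → V → ℝ) (hsym : ∀ u v, w u v = w v u) (hnn : ∀ u v, 0 ≤ w u v)
    (hdiag : ∀ v, w v v = 0)
    (G : SimpleGraph V) (hG : ∀ u v, G.Adj u v ↔ u ≠ v ∧ 0 < w u v)
    (hconn : G.Connected)
    (L : Matrix V V ℝ)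
    (hL : ∀ u v, L u v = if u = v then ∑ k, w u k else -(w u v))
    (y : V → ℝ) (a : V) (hy : ∀ v, v ≠ a → L.mulVec y v ≤ 0) :
    ∀ v, y v ≤ y a := by
  obtain ⟨v0, -, hv0⟩ := Finset.exists_max_image Finset.univ y ⟨a, Finset.mem_univ a⟩
  have hmax : ∀ v, y v ≤ y v0 := fun v => hv0 v (Finset.mem_univ v)
  -- compute (L *ᵥ y) v
  have hcomp : ∀ v, L.mulVec y v = ∑ k, w v k * (y v - y k) := by
    intro v
    have : ∀ k ∈ Finset.univ, L v k * y k
        = (if k = v then (∑ j, w v j) * y v else 0) - w v k * y k := by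
      intro k _
      rcases eq_or_ne k v with rfl | hk
      · rw [hL, if_pos rfl, if_pos rfl, hdiag]; ring
      · rw [hL, if_neg (fun h => hk h.symm), if_neg hk]; ring
    calc L.mulVec y v = ∑ k, L v k * y k := by
          simp [Matrix.mulVec, dotProduct]
      _ = ∑ k, ((if k = v then (∑ j, w v j) * y v else 0) - w v k * y k) :=
          Finset.sum_congr rfl this
      _ = (∑ j, w v j) * y v - ∑ k, w v k * y k := by
          rw [Finset.sum_sub_distrib, Finset.sum_ite_eq' Finset.univ v
            (fun _ => (∑ j, w v j) * y v)]
          simp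
      _ = ∑ k, w v k * (y v - y k) := by
          rw [Finset.sum_mul]
          rw [← Finset.sum_sub_distrib]
          congr 1; ext k; ring
  -- propagate the maximum along walks to a
  have hkey : ∀ (v b : V) (p : G.Walk v b),
      (∀ x, x ≠ b → L.mulVec y x ≤ 0) → y v = y v0 → y b = y v0 := by
    intro v b p
    induction p with
    | nil => exact fun _ h => h
    | @cons v u b hadj p ih =>
      intro hyb hv
      by_cases hva : v = b
      · exact hva ▸ hv
      · have h1 : L.mulVec y v ≤ 0 := hyb v hva
        have h2 : ∀ k ∈ Finset.univ, 0 ≤ w v k * (y v - y k) := by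
          intro k _
          exact mul_nonneg (hnn v k) (by rw [hv]; linarith [hmax k])
        have h3 : ∑ k, w v k * (y v - y k) = 0 := by
          have := Finset.sum_nonneg h2
          rw [hcomp] at h1
          linarith
        have h4 := (Finset.sum_eq_zero_iff_of_nonneg h2).1 h3 u (Finset.mem_univ u)
        have h5 : 0 < w v u := ((hG v u).1 hadj).2
        have h6 : y u = y v0 := by
          have : y v - y u = 0 := by
            rcases mul_eq_zero.1 h4 with h | h
            · exact absurd h (ne_of_gt h5)
            · exact h
          rw [← hv]; linarith
        exact ih hyb h6
  have := hkey v0 a ((hconn.preconnected v0 a).some) hy rfl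
  intro v
  rw [this]
  exact hmax v

lemma projfix {V : Type*} [Fintype V] [DecidableEq V]
    (w : V → V → ℝ) (hsym : ∀ u v, w u v = w v u) (hnn : ∀ u v, 0 ≤ w u v)
    (hdiag : ∀ v, w v v = 0)
    (G : SimpleGraph V) (hG : ∀ u v, G.Adj u v ↔ u ≠ v ∧ 0 < w u v)
    (hconn : G.Connected)
    (L : Matrix V V ℝ)
    (hL : ∀ u v, L u v = if u = v then ∑ k, w u k else -(w u v))
    (Lp : Matrix V V ℝ)
    (hmp1 : L * Lp * L = L) (hmp3 : (L * Lp)ᵀ = L * Lp)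
    (a b : V) :
    L.mulVec (Lp.mulVec (Pi.single a 1 - Pi.single b 1))
      = Pi.single a 1 - Pi.single b 1 := by
  set x : V → ℝ := Pi.single a 1 - Pi.single b 1 with hx
  set y : V → ℝ := x - (L * Lp).mulVec x with hy
  have hLsym : Lᵀ = L := by
    ext u v
    simp only [Matrix.transpose_apply, hL]
    rcases eq_or_ne u v with rfl | huv
    · simp
    · rw [if_neg (fun h => huv h.symm), if_neg huv, hsym]
  -- L *ᵥ y = 0
  have hLy : L.mulVec y = 0 := by
    have h1 : Matrix.vecMul ((L * Lp).mulVec x) L = Matrix.vecMul x L := by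
      rw [← Matrix.vecMul_transpose]
      rw [Matrix.vecMul_vecMul]
      rw [hmp3, hmp1]
    calc L.mulVec y = Lᵀ.mulVec y := by rw [hLsym]
      _ = Matrix.vecMul y L := Matrix.mulVec_transpose L y
      _ = Matrix.vecMul x L - Matrix.vecMul ((L * Lp).mulVec x) L := by
          rw [hy, Matrix.sub_vecMul]
      _ = 0 := by rw [h1, sub_self]
  -- y is constant
  have hconst : ∀ u v : V, y u = y v := by
    intro u v
    have h0 : ∀ c : V, ∀ v, v ≠ c → L.mulVec y v ≤ 0 := by
      intro c v _
      rw [hLy]; simp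
    exact le_antisymm (walkprop w hsym hnn hdiag G hG hconn L hL y v (h0 v) u)
      (walkprop w hsym hnn hdiag G hG hconn L hL y u (h0 u) v)
  -- sum of y is zero
  have hsumx : ∑ v, x v = 0 := by
    rw [hx]
    simp only [Pi.sub_apply]
    rw [Finset.sum_sub_distrib]
    rw [Finset.sum_pi_single', Finset.sum_pi_single']
    simp
  have hcol : Matrix.vecMul (fun _ => (1:ℝ)) L = 0 := by
    ext v
    have : ∀ u ∈ Finset.univ, (1:ℝ) * L u v
        = (if u = v then (∑ k, w v k) + w u v else 0) - w v u := by
      intro u _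
      rcases eq_or_ne u v with rfl | huv
      · rw [hL, if_pos rfl, if_pos rfl, hdiag]; ring
      · rw [hL, if_neg huv, if_neg huv, hsym]; ring
    calc Matrix.vecMul (fun _ => (1:ℝ)) L v = ∑ u, (1:ℝ) * L u v := by
          simp [Matrix.vecMul, dotProduct]
      _ = ∑ u, ((if u = v then (∑ k, w v k) + w u v else 0) - w v u) :=
          Finset.sum_congr rfl this
      _ = ((∑ k, w v k) + w v v) - ∑ u, w v u := by
          rw [Finset.sum_sub_distrib, Finset.sum_ite_eq' Finset.univ v
            (fun u => (∑ k, w v k) + w u v)]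
          simp
      _ = 0 := by rw [hdiag]; ring
  have hsumP : ∑ v, (L * Lp).mulVec x v = 0 := by
    have : ∑ v, (L * Lp).mulVec x v
        = dotProduct (fun _ => (1:ℝ)) ((L * Lp).mulVec x) := by
      simp [dotProduct]
    rw [this, Matrix.dotProduct_mulVec, ← Matrix.vecMul_vecMul, hcol]
    simp [Matrix.vecMul, dotProduct]
  have hsumy : ∑ v, y v = 0 := by
    rw [hy]
    simp only [Pi.sub_apply, Finset.sum_sub_distrib, hsumx, hsumP, sub_self]
  -- hence y = 0
  have hy0 : ∀ v, y v = 0 := by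
    intro v
    have hcard : (0:ℝ) < (Fintype.card V : ℝ) := by
      have : 0 < Fintype.card V := Fintype.card_pos_iff.2 ⟨a⟩
      exact_mod_cast this
    have : ∑ u, y u = (Fintype.card V : ℝ) * y v := by
      rw [Finset.sum_congr rfl (fun u _ => hconst u v)]
      rw [Finset.sum_const, Finset.card_univ, nsmul_eq_mul, mul_comm]
    rw [hsumy] at this
    have := this.symm
    rcases mul_eq_zero.1 this with h | h
    · exact absurd h (ne_of_gt hcard)
    · exact h
  have hPx : (L * Lp).mulVec x = x := by
    funext v
    have h := hy0 v
    simp only [hy, Pi.sub_apply] at h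
    linarith
  rw [Matrix.mulVec_mulVec, hPx]

/-- The effective resistance distance on the vertices of a finite simple
connected weighted graph satisfies the triangle inequality. -/
theorem effectiveResistance_triangle {V : Type*} [Fintype V] [DecidableEq V]
    (w : V → V → ℝ) (hsym : ∀ u v, w u v = w v u) (hnn : ∀ u v, 0 ≤ w u v)
    (hdiag : ∀ v, w v v = 0)
    (G : SimpleGraph V) (hG : ∀ u v, G.Adj u v ↔ u ≠ v ∧ 0 < w u v)
    (hconn : G.Connected)
    (L : Matrix V V ℝ)
    (hL : ∀ u v, L u v = if u = v then ∑ k, w u k else -(w u v))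
    (Lp : Matrix V V ℝ)
    (hmp1 : L * Lp * L = L) (hmp2 : Lp * L * Lp = Lp)
    (hmp3 : (L * Lp)ᵀ = L * Lp) (hmp4 : (Lp * L)ᵀ = Lp * L)
    (R : V → V → ℝ)
    (hR : ∀ v1 v2, R v1 v2 =
      dotProduct (Pi.single v1 1 - Pi.single v2 1)
        (Lp.mulVec (Pi.single v1 1 - Pi.single v2 1))) :
    ∀ v1 v2 v3 : V, R v1 v3 ≤ R v1 v2 + R v2 v3 := by
  intro v1 v2 v3
  have hdot : ∀ (p q : V) (z : V → ℝ),
      dotProduct (Pi.single p 1 - Pi.single q 1) z = z p - z q := by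
    intro p q z
    rw [sub_dotProduct, single_dotProduct, single_dotProduct]
    ring
  set f := Lp.mulVec (Pi.single v1 1 - Pi.single v3 1) with hfdef
  set g := Lp.mulVec (Pi.single v1 1 - Pi.single v2 1) with hgdef
  set h := Lp.mulVec (Pi.single v2 1 - Pi.single v3 1) with hhdef
  have hf : L.mulVec f = Pi.single v1 1 - Pi.single v3 1 :=
    projfix w hsym hnn hdiag G hG hconn L hL Lp hmp1 hmp3 v1 v3
  have hg : L.mulVec g = Pi.single v1 1 - Pi.single v2 1 :=
    projfix w hsym hnn hdiag G hG hconn L hL Lp hmp1 hmp3 v1 v2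
  have hh : L.mulVec h = Pi.single v2 1 - Pi.single v3 1 :=
    projfix w hsym hnn hdiag G hG hconn L hL Lp hmp1 hmp3 v2 v3
  -- first comparison: (f - g) v1 ≤ (f - g) v2
  have key1 : ∀ v, (f - g) v ≤ (f - g) v2 := by
    apply walkprop w hsym hnn hdiag G hG hconn L hL (f - g) v2
    intro v hv
    rw [Matrix.mulVec_sub, hf, hg]
    simp only [Pi.sub_apply, Pi.single_apply]
    rw [if_neg hv]
    split_ifs <;> norm_num
  -- second comparison: (h - f) v3 ≤ (h - f) v2
  have key2 : ∀ v, (h - f) v ≤ (h - f) v2 := by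
    apply walkprop w hsym hnn hdiag G hG hconn L hL (h - f) v2
    intro v hv
    rw [Matrix.mulVec_sub, hh, hf]
    simp only [Pi.sub_apply, Pi.single_apply]
    rw [if_neg hv]
    split_ifs <;> norm_num
  have e13 : R v1 v3 = f v1 - f v3 := by rw [hR, ← hfdef, hdot]
  have e12 : R v1 v2 = g v1 - g v2 := by rw [hR, ← hgdef, hdot]
  have e23 : R v2 v3 = h v2 - h v3 := by rw [hR, ← hhdef, hdot]
  have k1 := key1 v1
  have k2 := key2 v3
  simp only [Pi.sub_apply] at k1 k2
  rw [e13, e12, e23]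
  linarith
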